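/- Let n ≥ 1, let w ∈ ℝⁿ have strictly positive entries with W = diag(w), let V be an n×n real orthogonal matrix, and let Λ = diag(λ₁,…,λₙ) with λᵢ ∈ [0,1]. Let s₀ = 0 < s₁ = 1 < ⋯ < s_{J+1} be natural numbers and define the J+2 filter matrices F_j = W⁻¹ V diag(√(λᵢ^{sⱼ} − λᵢ^{s_{j+1}})) Vᵀ W for 0 ≤ j ≤ J and F_{J+1} = W⁻¹ V diag(√(λᵢ^{s_{J+1}})) Vᵀ W. Then for every m ≥ 1 and every x ∈ ℝⁿ, the total energy of the m-layer BLIS coefficients equals the energy of the input: Σ over all tuples (j₁,k₁,…,j_m,k_m) with jᵢ ∈ {0,…,J+1}, kᵢ ∈ {1,2} of ‖B[j₁,k₁,…,j_m,k_m](x)‖_w² = ‖x‖_w². -/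
import Mathlib


open Matrix

/-- The weighted squared norm `‖x‖_w² = Σᵢ wᵢ² xᵢ²`. -/
noncomputable def wnorm2 {n : ℕ} (w x : Fin n → ℝ) : ℝ := ∑ i, (w i) ^ 2 * (x i) ^ 2

/-- The two activations: `act 0 = σ₁` is the entrywise ReLU and `act 1 = σ₂` is the
entrywise reflected ReLU. -/
def act {n : ℕ} (k : Fin 2) (x : Fin n → ℝ) : Fin n → ℝ :=
  if k = 0 then (fun i => max (x i) 0) else (fun i => max (-(x i)) 0)

/-- The BLIS coefficient `B[j₁,k₁,…,j_m,k_m](x) = σ_{k_m}(F_{j_m} ⋯ σ_{k_1}(F_{j_1} x) ⋯)`,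
where `js i = j_{i+1}` and `ks i = k_{i+1}`. -/
noncomputable def blis {n N : ℕ} (F : Fin N → Matrix (Fin n) (Fin n) ℝ) :
    (m : ℕ) → (Fin m → Fin N) → (Fin m → Fin 2) → (Fin n → ℝ) → Fin n → ℝ
  | 0, _, _, x => x
  | m + 1, js, ks, x =>
      act (ks (Fin.last m)) ((F (js (Fin.last m))) *ᵥ blis F m (Fin.init js) (Fin.init ks) x)

/-- Splitting energy across the two activations. -/
lemma act_energy {n : ℕ} (w : Fin n → ℝ) (y : Fin n → ℝ) :
    ∑ k : Fin 2, wnorm2 w (act k y) = wnorm2 w y := by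
  rw [Fin.sum_univ_two]
  have h0 : act (0 : Fin 2) y = fun i => max (y i) 0 := by simp [act]
  have h1 : act (1 : Fin 2) y = fun i => max (-(y i)) 0 := by
    rw [act, if_neg (by decide : (1 : Fin 2) ≠ 0)]
  rw [h0, h1]
  unfold wnorm2
  rw [← Finset.sum_add_distrib]
  refine Finset.sum_congr rfl fun i _ => ?_
  dsimp only
  rcases le_total (y i) 0 with h | h
  · rw [max_eq_right h, max_eq_left (by linarith)]; ring
  · rw [max_eq_left h, max_eq_right (by linarith)]; ring

/-- Energy preservation under multiplication by an orthogonal matrix. -/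
lemma ortho_energy {n : ℕ} (A : Matrix (Fin n) (Fin n) ℝ) (hA : Aᵀ * A = 1)
    (u : Fin n → ℝ) : ∑ i, (A *ᵥ u) i ^ 2 = ∑ i, u i ^ 2 := by
  have key : ∀ v : Fin n → ℝ, ∑ i, v i ^ 2 = v ⬝ᵥ v := by
    intro v; simp [dotProduct, sq]
  rw [key, key, dotProduct_mulVec, ← vecMul_transpose, vecMul_vecMul, hA, vecMul_one]

theorem blis_W1_energy_conservation {n J : ℕ} (hn : 1 ≤ n)
    (w : Fin n → ℝ) (hw : ∀ i, 0 < w i)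
    (V : Matrix (Fin n) (Fin n) ℝ) (hV : Vᵀ * V = 1)
    (lam : Fin n → ℝ) (hlam : ∀ i, lam i ∈ Set.Icc (0 : ℝ) 1)
    (s : Fin (J + 2) → ℕ) (hs0 : s 0 = 0) (hs1 : s 1 = 1) (hs : StrictMono s)
    (F : Fin (J + 2) → Matrix (Fin n) (Fin n) ℝ)
    (hF : ∀ j : Fin (J + 1), F j.castSucc =
      Matrix.diagonal (fun i => (w i)⁻¹) * V *
        Matrix.diagonal (fun i => Real.sqrt ((lam i) ^ (s j.castSucc) - (lam i) ^ (s j.succ))) *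
        Vᵀ * Matrix.diagonal w)
    (hFlast : F (Fin.last (J + 1)) =
      Matrix.diagonal (fun i => (w i)⁻¹) * V *
        Matrix.diagonal (fun i => Real.sqrt ((lam i) ^ (s (Fin.last (J + 1))))) *
        Vᵀ * Matrix.diagonal w) :
    ∀ m : ℕ, 1 ≤ m → ∀ x : Fin n → ℝ,
      (∑ js : Fin m → Fin (J + 2), ∑ ks : Fin m → Fin 2,
        wnorm2 w (blis F m js ks x)) = wnorm2 w x := by
  have hVVt : V * Vᵀ = 1 := by
    rw [mul_eq_one_comm] at hV; exact hV
  -- the diagonal entries of the filters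
  set g : Fin (J + 2) → Fin n → ℝ := fun j i =>
    if h : (j : ℕ) < J + 1 then
      Real.sqrt ((lam i) ^ (s j) - (lam i) ^ (s (j + 1)))
    else Real.sqrt ((lam i) ^ (s (Fin.last (J + 1)))) with hg
  have hcs : ∀ j : Fin (J + 1), (j.castSucc : Fin (J + 2)) + 1 = j.succ := by
    intro j
    ext
    have h2 : (j : ℕ) + 1 < J + 2 := by omega
    simp [Fin.add_def, Nat.mod_eq_of_lt h2]
  have hFg : ∀ j : Fin (J + 2), F j =
      Matrix.diagonal (fun i => (w i)⁻¹) * V * Matrix.diagonal (g j) * Vᵀ *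
        Matrix.diagonal w := by
    intro j
    induction j using Fin.lastCases with
    | last =>
      rw [hFlast]
      have hgl : g (Fin.last (J + 1)) =
          fun i => Real.sqrt ((lam i) ^ (s (Fin.last (J + 1)))) := by
        funext i; rw [hg]; simp [Fin.last]
      rw [hgl]
    | cast j =>
      rw [hF j]
      have hlt : ((j.castSucc : Fin (J + 2)) : ℕ) < J + 1 := j.isLt
      have hgc : g j.castSucc =
          fun i => Real.sqrt ((lam i) ^ (s j.castSucc) - (lam i) ^ (s j.succ)) := by
        funext i; rw [hg]; simp only [hlt, dif_pos, hcs j]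
      rw [hgc]
  -- sum of squares of filter diagonals telescopes to 1
  have hgsum : ∀ i, ∑ j : Fin (J + 2), (g j i) ^ 2 = 1 := by
    intro i
    obtain ⟨hl0, hl1⟩ := hlam i
    have hpow : ∀ a b : Fin (J + 2), a ≤ b → (lam i) ^ (s b) ≤ (lam i) ^ (s a) := by
      intro a b hab
      exact pow_le_pow_of_le_one hl0 hl1 (hs.monotone hab)
    have hsq : ∀ j : Fin (J + 1), (g j.castSucc i) ^ 2 =
        (lam i) ^ (s j.castSucc) - (lam i) ^ (s j.succ) := by
      intro j
      have hlt : ((j.castSucc : Fin (J + 2)) : ℕ) < J + 1 := j.isLt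
      rw [hg]
      simp only [hlt, dif_pos, hcs j]
      rw [Real.sq_sqrt (by linarith [hpow j.castSucc j.succ (Fin.castSucc_le_succ j)])]
    have hsql : (g (Fin.last (J + 1)) i) ^ 2 = (lam i) ^ (s (Fin.last (J + 1))) := by
      rw [hg]
      simp only [Fin.val_last, lt_irrefl, dif_neg (lt_irrefl (J + 1))]
      exact Real.sq_sqrt (pow_nonneg hl0 _)
    rw [Fin.sum_univ_castSucc]
    simp only [hsq, hsql]
    -- telescoping
    have : ∀ t : ℕ, ∀ h : t < J + 2, True := fun _ _ => trivial
    set f : ℕ → ℝ := fun t => (lam i) ^ (s (if h : t < J + 2 then ⟨t, h⟩ else 0)) with hf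
    have hstep : ∀ j : Fin (J + 1), (lam i) ^ (s j.castSucc) - (lam i) ^ (s j.succ)
        = f (j : ℕ) - f ((j : ℕ) + 1) := by
      intro j
      rw [hf]
      have h1 : (j : ℕ) < J + 2 := Nat.lt_succ_of_lt j.isLt
      have h2 : (j : ℕ) + 1 < J + 2 := Nat.succ_lt_succ j.isLt
      simp only [h1, h2, dif_pos]
      congr 2
    rw [Finset.sum_congr rfl (fun j _ => hstep j),
      Fin.sum_univ_eq_sum_range (fun t => f t - f (t + 1)) (J + 1),
      Finset.sum_range_sub' f (J + 1)]
    have h0 : f 0 = 1 := by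
      rw [hf]
      simp only [Nat.zero_lt_succ, dif_pos]
      rw [show (⟨0, by omega⟩ : Fin (J + 2)) = 0 from rfl, hs0, pow_zero]
    have hl : f (J + 1) = (lam i) ^ (s (Fin.last (J + 1))) := by
      rw [hf]
      simp only [Nat.lt_succ_self, dif_pos]
      rfl
    rw [h0, hl]; ring
  -- energy of one filter layer
  have hfilter : ∀ y : Fin n → ℝ,
      ∑ j : Fin (J + 2), wnorm2 w (F j *ᵥ y) = wnorm2 w y := by
    intro y
    have hwinv : Matrix.diagonal w * Matrix.diagonal (fun i => (w i)⁻¹) = 1 := by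
      rw [Matrix.diagonal_mul_diagonal,
        show (fun i => w i * (w i)⁻¹) = fun _ : Fin n => (1 : ℝ) from
          funext fun i => mul_inv_cancel₀ (hw i).ne', Matrix.diagonal_one]
    have hwn : ∀ v : Fin n → ℝ, wnorm2 w v = ∑ i, ((Matrix.diagonal w) *ᵥ v) i ^ 2 := by
      intro v
      unfold wnorm2
      refine Finset.sum_congr rfl fun i _ => ?_
      rw [mulVec_diagonal]; ring
    set z : Fin n → ℝ := (Vᵀ * Matrix.diagonal w) *ᵥ y with hz
    have hkey : ∀ j, wnorm2 w (F j *ᵥ y) = ∑ i, (g j i) ^ 2 * (z i) ^ 2 := by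
      intro j
      rw [hwn, mulVec_mulVec, hFg j]
      have : Matrix.diagonal w *
          (Matrix.diagonal (fun i => (w i)⁻¹) * V * Matrix.diagonal (g j) * Vᵀ *
            Matrix.diagonal w)
          = V * (Matrix.diagonal (g j) * (Vᵀ * Matrix.diagonal w)) := by
        rw [show Matrix.diagonal (fun i => (w i)⁻¹) * V * Matrix.diagonal (g j) * Vᵀ *
            Matrix.diagonal w = Matrix.diagonal (fun i => (w i)⁻¹) *
              (V * (Matrix.diagonal (g j) * (Vᵀ * Matrix.diagonal w))) by
          simp only [Matrix.mul_assoc]]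
        rw [← Matrix.mul_assoc, hwinv, Matrix.one_mul]
      rw [this, ← mulVec_mulVec, ortho_energy V hV, ← mulVec_mulVec, ← hz]
      refine Finset.sum_congr rfl fun i _ => ?_
      rw [mulVec_diagonal]; ring
    rw [Finset.sum_congr rfl (fun j _ => hkey j), Finset.sum_comm]
    have : ∀ i, ∑ j : Fin (J + 2), (g j i) ^ 2 * (z i) ^ 2 = (z i) ^ 2 := by
      intro i
      rw [← Finset.sum_mul, hgsum i, one_mul]
    rw [Finset.sum_congr rfl (fun i _ => this i), hz, ← mulVec_mulVec]
    have := ortho_energy Vᵀ (by rw [Matrix.transpose_transpose]; exact hVVt)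
      ((Matrix.diagonal w) *ᵥ y)
    rw [this, ← hwn]
  -- main induction, works for all m including 0
  have main : ∀ m : ℕ, ∀ x : Fin n → ℝ,
      (∑ js : Fin m → Fin (J + 2), ∑ ks : Fin m → Fin 2,
        wnorm2 w (blis F m js ks x)) = wnorm2 w x := by
    intro m
    induction m with
    | zero =>
        intro x
        simp [blis]
    | succ m ih =>
        intro x
        set eJ := Fin.snocEquiv (fun _ : Fin (m + 1) => Fin (J + 2)) with heJ
        set eK := Fin.snocEquiv (fun _ : Fin (m + 1) => Fin 2) with heK
        have hblis : ∀ (p : Fin (J + 2) × (Fin m → Fin (J + 2)))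
            (q : Fin 2 × (Fin m → Fin 2)),
            blis F (m + 1) (eJ p) (eK q) x =
              act q.1 (F p.1 *ᵥ blis F m p.2 q.2 x) := by
          intro p q
          show blis F (m + 1) (Fin.snoc p.2 p.1) (Fin.snoc q.2 q.1) x = _
          simp [blis, Fin.init_snoc, Fin.snoc_last]
        calc ∑ js : Fin (m + 1) → Fin (J + 2), ∑ ks : Fin (m + 1) → Fin 2,
              wnorm2 w (blis F (m + 1) js ks x)
            = ∑ j : Fin (J + 2), ∑ js' : Fin m → Fin (J + 2), ∑ k : Fin 2,
                ∑ ks' : Fin m → Fin 2,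
                wnorm2 w (act k (F j *ᵥ blis F m js' ks' x)) := by
              rw [← Equiv.sum_comp eJ (fun js => ∑ ks : Fin (m + 1) → Fin 2,
                wnorm2 w (blis F (m + 1) js ks x)), Fintype.sum_prod_type]
              refine Finset.sum_congr rfl fun j _ => Finset.sum_congr rfl fun js' _ => ?_
              rw [← Equiv.sum_comp eK (fun ks =>
                wnorm2 w (blis F (m + 1) (eJ (j, js')) ks x)), Fintype.sum_prod_type]
              exact Finset.sum_congr rfl fun k _ => Finset.sum_congr rfl fun ks' _ => by
                rw [hblis (j, js') (k, ks')]
          _ = ∑ js' : Fin m → Fin (J + 2), ∑ j : Fin (J + 2), ∑ k : Fin 2,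
                ∑ ks' : Fin m → Fin 2,
                wnorm2 w (act k (F j *ᵥ blis F m js' ks' x)) := Finset.sum_comm
          _ = ∑ js' : Fin m → Fin (J + 2), ∑ j : Fin (J + 2), ∑ ks' : Fin m → Fin 2,
                ∑ k : Fin 2,
                wnorm2 w (act k (F j *ᵥ blis F m js' ks' x)) := by
              exact Finset.sum_congr rfl fun js' _ =>
                Finset.sum_congr rfl fun j _ => Finset.sum_comm
          _ = ∑ js' : Fin m → Fin (J + 2), ∑ ks' : Fin m → Fin 2, ∑ j : Fin (J + 2),
                ∑ k : Fin 2,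
                wnorm2 w (act k (F j *ᵥ blis F m js' ks' x)) :=
              Finset.sum_congr rfl fun js' _ => Finset.sum_comm
          _ = ∑ js' : Fin m → Fin (J + 2), ∑ ks' : Fin m → Fin 2,
                wnorm2 w (blis F m js' ks' x) := by
              refine Finset.sum_congr rfl fun js' _ => Finset.sum_congr rfl fun ks' _ => ?_
              calc ∑ j : Fin (J + 2), ∑ k : Fin 2,
                    wnorm2 w (act k (F j *ᵥ blis F m js' ks' x))
                  = ∑ j : Fin (J + 2), wnorm2 w (F j *ᵥ blis F m js' ks' x) :=
                    Finset.sum_congr rfl fun j _ => act_energy w _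
                _ = wnorm2 w (blis F m js' ks' x) := hfilter _
          _ = wnorm2 w x := ih x
  exact fun m _ x => main m x
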